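/- Let 1 ≤ p < ∞ and let φ : ℕ → ℕ be a map such that the set {|φ⁻¹({n})| : n ∈ ℕ} of fiber cardinalities is bounded, so that the composition operator C_φ : ℓᵖ → ℓᵖ given by (C_φ f)(n) = f(φ(n)) is a bounded linear operator. Then C_φ is a topological divisor of zero in B(ℓᵖ) if and only if φ is not bijective. -/

import Mathlib

open Filter ENNReal

/-- `x` is a topological divisor of zero in a normed ring: there is a sequence of
norm-one elements whose products with `x` (on one side) tend to zero in norm. -/
def IsTDZ {A : Type*} [NormedRing A] (x : A) : Prop :=
  ∃ y : ℕ → A, (∀ n, ‖y n‖ = 1) ∧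
    (Tendsto (fun n => ‖x * y n‖) atTop (nhds 0) ∨
      Tendsto (fun n => ‖y n * x‖) atTop (nhds 0))

variable (p : ℝ≥0∞) [Fact (1 ≤ p)]

noncomputable def evalCLM (a : ℕ) : lp (fun _ : ℕ => ℂ) p →L[ℂ] ℂ :=
  LinearMap.mkContinuous
    { toFun := fun f => f a
      map_add' := fun f g => by simp
      map_smul' := fun c f => by simp }
    1 (fun f => by
      show ‖f a‖ ≤ 1 * ‖f‖
      simpa using lp.norm_apply_le_norm (zero_lt_one.trans_le (Fact.out : (1:ℝ≥0∞) ≤ p)).ne' f a)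

@[simp] lemma evalCLM_apply (a : ℕ) (f : lp (fun _ : ℕ => ℂ) p) : evalCLM p a f = f a := rfl


set_option maxHeartbeats 1000000 in
set_option synthInstance.maxHeartbeats 400000 in
/-- Let `1 ≤ p < ∞` and let `φ : ℕ → ℕ` have uniformly bounded fiber cardinalities, so
that the composition operator `C_φ : ℓᵖ → ℓᵖ`, `(C_φ f) n = f (φ n)`, is bounded. Then
`C_φ` is a topological divisor of zero in `B(ℓᵖ)` if and only if `φ` is not bijective. -/
theorem composition_op_tdz_iff_not_bijective (p : ℝ≥0∞) [Fact (1 ≤ p)] (hp : p ≠ ⊤)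
    (φ : ℕ → ℕ)
    (hfib : ∃ N : ℕ, ∀ n : ℕ, (φ ⁻¹' {n}).Finite ∧ (φ ⁻¹' {n}).ncard ≤ N)
    (C : lp (fun _ : ℕ => ℂ) p →L[ℂ] lp (fun _ : ℕ => ℂ) p)
    (hC : ∀ (f : lp (fun _ : ℕ => ℂ) p) (n : ℕ), C f n = f (φ n)) :
    IsTDZ C ↔ ¬ Function.Bijective φ := by
  have h1 : (1:ℝ≥0∞) ≤ p := Fact.out
  have hp0 : p ≠ 0 := (zero_lt_one.trans_le h1).ne'
  have hq : 0 < p.toReal := ENNReal.toReal_pos hp0 hp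
  constructor
  · intro hT hb
    set e := Equiv.ofBijective φ hb with he
    have hiso : ∀ f : lp (fun _ : ℕ => ℂ) p, ‖C f‖ = ‖f‖ := by
      intro f
      rw [lp.norm_eq_tsum_rpow hq, lp.norm_eq_tsum_rpow hq]
      congr 1
      rw [tsum_congr (fun n => by rw [hC] : ∀ n, ‖(C f) n‖ ^ p.toReal = ‖f (φ n)‖ ^ p.toReal)]
      exact e.tsum_eq (fun n => ‖f n‖ ^ p.toReal)
    have hsurj : ∀ g : lp (fun _ : ℕ => ℂ) p, ∃ f, C f = g ∧ ‖f‖ = ‖g‖ := by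
      intro g
      have hs : Summable (fun n => ‖g n‖ ^ p.toReal) := (memℓp_gen_iff hq).1 (lp.memℓp g)
      have hmem : Memℓp (fun n => g (e.symm n)) p :=
        memℓp_gen (e.symm.summable_iff.2 hs)
      refine ⟨⟨fun n => g (e.symm n), hmem⟩, ?_, ?_⟩
      · apply lp.ext
        funext n
        have : (C (⟨fun n => g (e.symm n), hmem⟩ : lp (fun _ : ℕ => ℂ) p)) n
            = g (e.symm (φ n)) := hC _ n
        rw [this]
        simp [he]
      · rw [lp.norm_eq_tsum_rpow hq, lp.norm_eq_tsum_rpow hq]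
        congr 1
        exact e.symm.tsum_eq (fun n => ‖g n‖ ^ p.toReal)
    obtain ⟨y, hy1, hT'⟩ := hT
    rcases hT' with hL | hR
    · have hge : ∀ n, (1:ℝ) ≤ ‖C * y n‖ := by
        intro n
        rw [← hy1 n]
        refine ContinuousLinearMap.opNorm_le_bound _ (norm_nonneg _) (fun f => ?_)
        rw [← hiso (y n f)]
        exact (C * y n).le_opNorm f
      have : (1:ℝ) ≤ 0 := ge_of_tendsto' hL hge
      linarith
    · have hge : ∀ n, (1:ℝ) ≤ ‖y n * C‖ := by
        intro n
        rw [← hy1 n]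
        refine ContinuousLinearMap.opNorm_le_bound _ (norm_nonneg _) (fun g => ?_)
        obtain ⟨f, hf, hnf⟩ := hsurj g
        calc ‖y n g‖ = ‖(y n * C) f‖ := by rw [ContinuousLinearMap.mul_apply, hf]
          _ ≤ ‖y n * C‖ * ‖f‖ := (y n * C).le_opNorm f
          _ = ‖y n * C‖ * ‖g‖ := by rw [hnf]
      have : (1:ℝ) ≤ 0 := ge_of_tendsto' hR hge
      linarith
  · intro hnb
    rw [Function.Bijective, not_and_or] at hnb
    have norm_single_one : ∀ m : ℕ, ‖(lp.single p m (1:ℂ) : lp (fun _ : ℕ => ℂ) p)‖ = 1 := by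
      intro m
      have := lp.norm_single (E := fun _ : ℕ => ℂ) (zero_lt_one.trans_le h1) m (1:ℂ)
      simpa using this
    rcases hnb with hinj | hsur
    · -- not injective: right zero divisor
      rw [Function.not_injective_iff] at hinj
      obtain ⟨a, b, hab, hne⟩ := hinj
      set L : lp (fun _ : ℕ => ℂ) p →L[ℂ] ℂ := evalCLM p a - evalCLM p b with hL
      have hL1 : L (lp.single p a (1:ℂ)) = 1 := by
        simp [hL, lp.single_apply_self, lp.single_apply_ne p a _ (Ne.symm hne), Pi.single_eq_of_ne (Ne.symm hne)]
      have hLne : ‖L‖ ≠ 0 := by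
        intro h
        have hL0 : L = 0 := by rwa [norm_eq_zero] at h
        rw [hL0] at hL1
        simp at hL1
      set v : lp (fun _ : ℕ => ℂ) p := ((‖L‖ : ℂ))⁻¹ • lp.single p 0 (1:ℂ) with hv
      set y : lp (fun _ : ℕ => ℂ) p →L[ℂ] lp (fun _ : ℕ => ℂ) p := L.smulRight v with hy
      have hnv : ‖v‖ = ‖L‖⁻¹ := by
        rw [hv, norm_smul, norm_single_one, mul_one, norm_inv]
        simp
      have hny : ‖y‖ = 1 := by
        rw [hy, ContinuousLinearMap.norm_smulRight_apply, hnv, mul_inv_cancel₀ hLne]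
      have hzero : y * C = 0 := by
        apply ContinuousLinearMap.ext
        intro f
        rw [ContinuousLinearMap.mul_apply, ContinuousLinearMap.zero_apply,
          hy, ContinuousLinearMap.smulRight_apply]
        have h0 : L (C f) = 0 := by
          simp only [hL, ContinuousLinearMap.sub_apply, evalCLM_apply]
          rw [hC, hC, hab, sub_self]
        rw [h0, zero_smul]
      exact ⟨fun _ => y, fun _ => hny, Or.inr (by simp only [hzero, norm_zero]; exact tendsto_const_nhds)⟩
    · -- not surjective: left zero divisor
      rw [Function.Surjective] at hsur
      push_neg at hsur
      obtain ⟨m, hm⟩ := hsur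
      set L : lp (fun _ : ℕ => ℂ) p →L[ℂ] ℂ := evalCLM p 0 with hL
      have hL1 : L (lp.single p 0 (1:ℂ)) = 1 := by
        simp [hL, lp.single_apply_self]
      have hLne : ‖L‖ ≠ 0 := by
        intro h
        have hL0 : L = 0 := by rwa [norm_eq_zero] at h
        rw [hL0] at hL1
        simp at hL1
      set v : lp (fun _ : ℕ => ℂ) p := ((‖L‖ : ℂ))⁻¹ • lp.single p m (1:ℂ) with hv
      set y : lp (fun _ : ℕ => ℂ) p →L[ℂ] lp (fun _ : ℕ => ℂ) p := L.smulRight v with hy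
      have hnv : ‖v‖ = ‖L‖⁻¹ := by
        rw [hv, norm_smul, norm_single_one, mul_one, norm_inv]
        simp
      have hny : ‖y‖ = 1 := by
        rw [hy, ContinuousLinearMap.norm_smulRight_apply, hnv, mul_inv_cancel₀ hLne]
      have hzero : C * y = 0 := by
        apply ContinuousLinearMap.ext
        intro f
        rw [ContinuousLinearMap.mul_apply, ContinuousLinearMap.zero_apply]
        apply lp.ext
        funext n
        rw [hC, hy, ContinuousLinearMap.smulRight_apply]
        have hvn : v (φ n) = 0 := by
          rw [hv, lp.coeFn_smul, Pi.smul_apply,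
            lp.single_apply_ne p m _ (hm n), smul_zero]
        rw [lp.coeFn_smul, Pi.smul_apply, hvn, smul_zero]
        simp
      exact ⟨fun _ => y, fun _ => hny, Or.inl (by simp only [hzero, norm_zero]; exact tendsto_const_nhds)⟩
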